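/- Let α, β ∈ (0,1], let G be the conjugate Green's function, and let h : [0,1] → ℝ be continuous. Define x(t) = ∫₀¹ G(t,s) h(s) s^{β−1} ds. Then x(0) = x(1) = 0, and for every t ∈ (0,1), x is differentiable at t, the function y(t) := t^{1−α} x′(t) is differentiable at t, and −t^{1−β} y′(t) = h(t). -/

import Mathlib

open MeasureTheory Set intervalIntegral

/-- With `α, β ∈ (0,1]`, `G` the conjugate Green's function, `h` continuous on
`[0,1]`, and `x(t) = ∫₀¹ G(t,s) h(s) s^{β−1} ds`, we have `x(0) = x(1) = 0` and, for every
`t ∈ (0,1)`, `x` is differentiable at `t`, `y(u) := u^{1−α} x′(u)` is differentiable at `t`,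
and `−t^{1−β} y′(t) = h(t)`. -/
theorem conjugate_greens_function_solves_bvp
    (α β : ℝ) (hα : α ∈ Set.Ioc (0:ℝ) 1) (hβ : β ∈ Set.Ioc (0:ℝ) 1)
    (G : ℝ → ℝ → ℝ)
    (hG : ∀ t s : ℝ, G t s = if s ≤ t
        then (1 / α) * s ^ α * (1 - t ^ α)
        else (1 / α) * t ^ α * (1 - s ^ α))
    (h : ℝ → ℝ) (hh : ContinuousOn h (Set.Icc 0 1))
    (x : ℝ → ℝ) (hx : ∀ t : ℝ, x t = ∫ s in (0:ℝ)..1, G t s * h s * s ^ (β - 1)) :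
    x 0 = 0 ∧ x 1 = 0 ∧
    ∀ t ∈ Set.Ioo (0:ℝ) 1,
      DifferentiableAt ℝ x t ∧
      DifferentiableAt ℝ (fun u : ℝ => u ^ (1 - α) * deriv x u) t ∧
      -(t ^ (1 - β)) * deriv (fun u : ℝ => u ^ (1 - α) * deriv x u) t = h t := by
  obtain ⟨hα0, hα1⟩ := hα
  obtain ⟨hβ0, hβ1⟩ := hβ
  have hαne : α ≠ 0 := ne_of_gt hα0
  have huIcc : Set.uIcc (0:ℝ) 1 = Set.Icc 0 1 := Set.uIcc_of_le zero_le_one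
  -- boundary values
  have hx0 : x 0 = 0 := by
    rw [hx 0]
    have : ∀ s ∈ Set.uIcc (0:ℝ) 1, G 0 s * h s * s ^ (β - 1) = 0 := by
      intro s hs
      rw [hG]
      split_ifs with hsle
      · rw [huIcc] at hs
        have : s = 0 := le_antisymm hsle hs.1
        simp [this, Real.zero_rpow hαne]
      · simp [Real.zero_rpow hαne]
    rw [intervalIntegral.integral_congr this]
    simp
  have hx1 : x 1 = 0 := by
    rw [hx 1]
    have : ∀ s ∈ Set.uIcc (0:ℝ) 1, G 1 s * h s * s ^ (β - 1) = 0 := by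
      intro s hs
      rw [huIcc] at hs
      rw [hG, if_pos hs.2]
      simp [Real.one_rpow]
    rw [intervalIntegral.integral_congr this]
    simp
  refine ⟨hx0, hx1, ?_⟩
  -- auxiliary integrands
  set φ : ℝ → ℝ := fun s => s ^ (α + β - 1) * h s with hφdef
  set ψ : ℝ → ℝ := fun s => s ^ (β - 1) * ((1 - s ^ α) * h s) with hψdef
  have hcont_rpowα : Continuous fun s : ℝ => s ^ α := by
    rw [continuous_iff_continuousAt]
    intro s
    exact Real.continuousAt_rpow_const s α (Or.inr hα0.le)
  have hφint : IntervalIntegrable φ volume 0 1 := by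
    have h1 : IntervalIntegrable (fun s : ℝ => s ^ (α + β - 1)) volume 0 1 :=
      intervalIntegral.intervalIntegrable_rpow' (by linarith)
    exact h1.mul_continuousOn (huIcc ▸ hh)
  have hψint : IntervalIntegrable ψ volume 0 1 := by
    have h1 : IntervalIntegrable (fun s : ℝ => s ^ (β - 1)) volume 0 1 :=
      intervalIntegral.intervalIntegrable_rpow' (by linarith)
    exact h1.mul_continuousOn
      (((continuous_const.sub hcont_rpowα).continuousOn).mul (huIcc ▸ hh))
  set A : ℝ → ℝ := fun t => ∫ s in (0:ℝ)..t, φ s with hAdef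
  set B : ℝ → ℝ := fun t => ∫ s in t..(1:ℝ), ψ s with hBdef
  -- closed form for x on (0,1)
  have hxeq : ∀ u ∈ Set.Ioo (0:ℝ) 1, x u = ((1 - u ^ α) * A u + u ^ α * B u) / α := by
    intro u hu
    have hu0 : (0:ℝ) ≤ u := hu.1.le
    have hu1 : u ≤ 1 := hu.2.le
    have hφu : IntervalIntegrable φ volume 0 u :=
      hφint.mono_set (by rw [Set.uIcc_of_le hu0, huIcc]; exact Set.Icc_subset_Icc le_rfl hu1)
    have hψu : IntervalIntegrable ψ volume u 1 :=
      hψint.mono_set (by rw [Set.uIcc_of_le hu1, huIcc]; exact Set.Icc_subset_Icc hu0 le_rfl)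
    have hae1 : Set.EqOn (fun s : ℝ => ((1 - u ^ α) / α) * φ s)
        (fun s => G u s * h s * s ^ (β - 1)) (Set.Ioc 0 u) := by
      intro s hs
      have hs0 : (0:ℝ) < s := hs.1
      have hpow : s ^ (α + β - 1) = s ^ α * s ^ (β - 1) := by
        rw [← Real.rpow_add hs0]; ring_nf
      simp only [hφdef, hG u s, if_pos hs.2, hpow]
      ring
    have hae2 : Set.EqOn (fun s : ℝ => (u ^ α / α) * ψ s)
        (fun s => G u s * h s * s ^ (β - 1)) (Set.Ioc u 1) := by
      intro s hs
      simp only [hψdef, hG u s, if_neg (not_le.mpr hs.1)]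
      ring
    have hI1 : IntervalIntegrable (fun s => G u s * h s * s ^ (β - 1)) volume 0 u := by
      constructor
      · exact ((hφu.const_mul ((1 - u ^ α) / α)).1).congr_fun hae1 measurableSet_Ioc
      · have : Set.Ioc u 0 = ∅ := Set.Ioc_eq_empty (not_lt.mpr hu0)
        rw [MeasureTheory.IntegrableOn, this]
        simp
    have hI2 : IntervalIntegrable (fun s => G u s * h s * s ^ (β - 1)) volume u 1 := by
      constructor
      · exact ((hψu.const_mul (u ^ α / α)).1).congr_fun hae2 measurableSet_Ioc
      · have : Set.Ioc (1:ℝ) u = ∅ := Set.Ioc_eq_empty (not_lt.mpr hu1)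
        rw [MeasureTheory.IntegrableOn, this]
        simp
    have e1 : (∫ s in (0:ℝ)..u, G u s * h s * s ^ (β - 1)) = ((1 - u ^ α) / α) * A u := by
      rw [intervalIntegral.integral_of_le hu0,
        ← MeasureTheory.setIntegral_congr_fun measurableSet_Ioc hae1,
        MeasureTheory.integral_const_mul, hAdef]
      simp only [intervalIntegral.integral_of_le hu0]
    have e2 : (∫ s in u..(1:ℝ), G u s * h s * s ^ (β - 1)) = (u ^ α / α) * B u := by
      rw [intervalIntegral.integral_of_le hu1,
        ← MeasureTheory.setIntegral_congr_fun measurableSet_Ioc hae2,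
        MeasureTheory.integral_const_mul, hBdef]
      simp only [intervalIntegral.integral_of_le hu1]
    rw [hx u, ← intervalIntegral.integral_add_adjacent_intervals hI1 hI2, e1, e2]
    field_simp
    try ring
  -- derivatives of A and B
  have hcontφψ : ∀ t ∈ Set.Ioo (0:ℝ) 1, ContinuousAt φ t ∧ ContinuousAt ψ t := by
    intro t ht
    have hht : ContinuousAt h t := hh.continuousAt (Icc_mem_nhds ht.1 ht.2)
    have h1 : ContinuousAt (fun s : ℝ => s ^ (α + β - 1)) t :=
      Real.continuousAt_rpow_const t _ (Or.inl (ne_of_gt ht.1))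
    have h2 : ContinuousAt (fun s : ℝ => s ^ (β - 1)) t :=
      Real.continuousAt_rpow_const t _ (Or.inl (ne_of_gt ht.1))
    exact ⟨h1.mul hht, h2.mul ((continuousAt_const.sub hcont_rpowα.continuousAt).mul hht)⟩
  have hmeasφ : ∀ t ∈ Set.Ioo (0:ℝ) 1, StronglyMeasurableAtFilter φ (nhds t) volume := by
    intro t ht
    refine ⟨Set.Ioo 0 1, Ioo_mem_nhds ht.1 ht.2, ?_⟩
    exact ContinuousOn.aestronglyMeasurable
      (fun s hs => ((hcontφψ s hs).1).continuousWithinAt) measurableSet_Ioo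
  have hmeasψ : ∀ t ∈ Set.Ioo (0:ℝ) 1, StronglyMeasurableAtFilter ψ (nhds t) volume := by
    intro t ht
    refine ⟨Set.Ioo 0 1, Ioo_mem_nhds ht.1 ht.2, ?_⟩
    exact ContinuousOn.aestronglyMeasurable
      (fun s hs => ((hcontφψ s hs).2).continuousWithinAt) measurableSet_Ioo
  have hA : ∀ t ∈ Set.Ioo (0:ℝ) 1, HasDerivAt A (φ t) t := by
    intro t ht
    exact intervalIntegral.integral_hasDerivAt_right
      (hφint.mono_set (by rw [Set.uIcc_of_le ht.1.le, huIcc]; exact Set.Icc_subset_Icc le_rfl ht.2.le))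
      (hmeasφ t ht) (hcontφψ t ht).1
  have hB : ∀ t ∈ Set.Ioo (0:ℝ) 1, HasDerivAt B (-ψ t) t := by
    intro t ht
    exact intervalIntegral.integral_hasDerivAt_left
      (hψint.mono_set (by rw [Set.uIcc_of_le ht.2.le, huIcc]; exact Set.Icc_subset_Icc ht.1.le le_rfl))
      (hmeasψ t ht) (hcontφψ t ht).2
  -- derivative of x
  have hxderiv : ∀ t ∈ Set.Ioo (0:ℝ) 1, HasDerivAt x (t ^ (α - 1) * (B t - A t)) t := by
    intro t ht
    have ht0 : (0:ℝ) < t := ht.1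
    have hrpow : HasDerivAt (fun u : ℝ => u ^ α) (α * t ^ (α - 1)) t :=
      Real.hasDerivAt_rpow_const (Or.inl (ne_of_gt ht0))
    have hf := ((((hasDerivAt_const t (1:ℝ)).sub hrpow).mul (hA t ht)).add
      (hrpow.mul (hB t ht))).div_const α
    have hDval : ((0 - α * t ^ (α - 1)) * A t + (1 - t ^ α) * φ t
          + (α * t ^ (α - 1) * B t + t ^ α * -ψ t)) / α
        = t ^ (α - 1) * (B t - A t) := by
      have hpow : t ^ (α + β - 1) = t ^ α * t ^ (β - 1) := by
        rw [← Real.rpow_add ht0]; ring_nf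
      simp only [hφdef, hψdef, hpow]
      field_simp
      ring
    replace hf := hf.congr_deriv hDval
    have hev : x =ᶠ[nhds t] fun u => ((1 - u ^ α) * A u + u ^ α * B u) / α := by
      filter_upwards [Ioo_mem_nhds ht.1 ht.2] with u hu using hxeq u hu
    exact hf.congr_of_eventuallyEq hev
  intro t ht
  have ht0 : (0:ℝ) < t := ht.1
  -- y agrees with B - A on (0,1)
  have hyz : ∀ u ∈ Set.Ioo (0:ℝ) 1, u ^ (1 - α) * deriv x u = B u - A u := by
    intro u hu
    rw [(hxderiv u hu).deriv, ← mul_assoc, ← Real.rpow_add hu.1]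
    norm_num
  have hyev : (fun u : ℝ => u ^ (1 - α) * deriv x u) =ᶠ[nhds t] fun u => B u - A u := by
    filter_upwards [Ioo_mem_nhds ht.1 ht.2] with u hu using hyz u hu
  have hy : HasDerivAt (fun u : ℝ => u ^ (1 - α) * deriv x u) (-ψ t - φ t) t :=
    (((hB t ht).sub (hA t ht))).congr_of_eventuallyEq hyev
  refine ⟨(hxderiv t ht).differentiableAt, hy.differentiableAt, ?_⟩
  rw [hy.deriv]
  have hpow : t ^ (α + β - 1) = t ^ α * t ^ (β - 1) := by
    rw [← Real.rpow_add ht0]; ring_nf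
  have hpow2 : t ^ (1 - β) * t ^ (β - 1) = 1 := by
    rw [← Real.rpow_add ht0]
    norm_num
  simp only [hφdef, hψdef, hpow]
  have : -(t ^ (1 - β)) * (-(t ^ (β - 1) * ((1 - t ^ α) * h t)) - t ^ α * t ^ (β - 1) * h t)
      = (t ^ (1 - β) * t ^ (β - 1)) * h t := by ring
  rw [this, hpow2, one_mul]
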